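/- arXiv:2207.11578 — 5 statements merged into one kernel-verified Lean document; each statement's English description precedes it below -/
import Mathlib

section
/- Let S be a maximal independent set of a finite simple graph G = (V,E) and let e* > 0. Then the profile x with x_k = e* for k ∈ S and x_k = 0 for k ∉ S satisfies: x_k + Σ_{j∈N_k} x_j ≥ e* for all k ∈ V, and x_k > 0 implies x_k + Σ_{j∈N_k} x_j = e* (i.e., it is a Nash equilibrium of the public goods game with unilateral effort e*). -/
open Finset

/-- The specialized profile supported on a maximal independent set `S`
(`x_k = e*` on `S`, `0` off `S`) satisfies the Nash equilibrium conditions of the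
public goods game with unilateral effort `e* > 0`. -/
theorem stmt1 {V : Type*} [Fintype V] (G : SimpleGraph V) [DecidableRel G.Adj]
    (S : Set V) [DecidablePred (· ∈ S)]
    (hInd : ∀ i ∈ S, ∀ j ∈ S, ¬ G.Adj i j)
    (hMax : ∀ T : Set V, S ⊆ T → (∀ i ∈ T, ∀ j ∈ T, ¬ G.Adj i j) → T = S)
    (estar : ℝ) (he : 0 < estar)
    (x : V → ℝ) (hx : x = fun k => if k ∈ S then estar else 0) :
    ∀ k : V, estar ≤ x k + ∑ j ∈ G.neighborFinset k, x j ∧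
      (0 < x k → x k + ∑ j ∈ G.neighborFinset k, x j = estar) := by
  subst hx
  intro k
  by_cases hk : k ∈ S
  · have hsum : ∑ j ∈ G.neighborFinset k, (if j ∈ S then estar else 0) = 0 := by
      apply Finset.sum_eq_zero
      intro j hj
      rw [SimpleGraph.mem_neighborFinset] at hj
      have : j ∉ S := fun hjS => hInd k hk j hjS hj
      simp [this]
    simp only [hk, if_pos, hsum]
    exact ⟨le_of_eq (by ring), fun _ => by ring⟩
  · -- maximality: k has a neighbor in S
    have : ∃ j ∈ S, G.Adj k j := by
      by_contra hno
      push_neg at hno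
      have hT : ∀ i ∈ insert k S, ∀ j ∈ insert k S, ¬ G.Adj i j := by
        intro i hi j hj
        rcases hi with rfl | hi
        · rcases hj with rfl | hj
          · exact fun h => G.loopless.irrefl _ h
          · exact hno j hj
        · rcases hj with rfl | hj
          · exact fun h => hno i hi h.symm
          · exact hInd i hi j hj
      have := hMax (insert k S) (Set.subset_insert k S) hT
      exact hk (this ▸ Set.mem_insert k S)
    obtain ⟨j, hjS, hadj⟩ := this
    have hjmem : j ∈ G.neighborFinset k := by
      rw [SimpleGraph.mem_neighborFinset]; exact hadj
    have hle : estar ≤ ∑ j' ∈ G.neighborFinset k, (if j' ∈ S then estar else 0) := by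
      have := Finset.single_le_sum (f := fun j' => if j' ∈ S then estar else 0)
        (fun i _ => by positivity) hjmem
      simpa [hjS] using this
    constructor
    · simp only [hk, if_neg, not_false_iff]
      linarith
    · intro hpos
      simp [hk] at hpos
end

section
/- In the public goods game on graph G with unilateral effort e*, the maximum of the aggregate effort Σ_{k∈V} x_k over all Nash equilibria equals α(G)·e*, where α(G) is the independence number of G, and this maximum is attained by the specialized equilibrium supported on a maximum independent set. -/
open Finset

/-- Nash equilibrium (LCP form) of the public goods game with unilateral effort `estar`. -/
def isNE {V : Type*} [Fintype V] (G : SimpleGraph V) [DecidableRel G.Adj]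
    (estar : ℝ) (x : V → ℝ) : Prop :=
  (∀ k, 0 ≤ x k) ∧
  (∀ k, estar ≤ x k + ∑ j ∈ G.neighborFinset k, x j) ∧
  (∀ k, 0 < x k → x k + ∑ j ∈ G.neighborFinset k, x j = estar)

/-- Independence number of a finite graph. -/
noncomputable def indepNum {V : Type*} [Fintype V] [DecidableEq V]
    (G : SimpleGraph V) [DecidableRel G.Adj] : ℕ :=
  Finset.sup (Finset.univ.powerset.filter
    fun s : Finset V => ∀ i ∈ s, ∀ j ∈ s, ¬ G.Adj i j) Finset.card

lemma indep_card_le {V : Type*} [Fintype V] [DecidableEq V]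
    (G : SimpleGraph V) [DecidableRel G.Adj] (I : Finset V)
    (hI : ∀ i ∈ I, ∀ j ∈ I, ¬ G.Adj i j) : I.card ≤ indepNum G := by
  apply Finset.le_sup
  simp only [Finset.mem_filter, Finset.mem_powerset]
  exact ⟨Finset.subset_univ I, hI⟩

lemma exists_max_indep {V : Type*} [Fintype V] [DecidableEq V]
    (G : SimpleGraph V) [DecidableRel G.Adj] :
    ∃ S : Finset V, (∀ i ∈ S, ∀ j ∈ S, ¬ G.Adj i j) ∧ S.card = indepNum G := by
  classical
  have hne : (Finset.univ.powerset.filter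
      fun s : Finset V => ∀ i ∈ s, ∀ j ∈ s, ¬ G.Adj i j).Nonempty :=
    ⟨∅, by simp⟩
  obtain ⟨S, hS, hcard⟩ := Finset.exists_mem_eq_sup _ hne Finset.card
  simp only [Finset.mem_filter] at hS
  exact ⟨S, hS.2, hcard.symm⟩

lemma max_indep_maximal {V : Type*} [Fintype V] [DecidableEq V]
    (G : SimpleGraph V) [DecidableRel G.Adj] (S : Finset V)
    (hS : ∀ i ∈ S, ∀ j ∈ S, ¬ G.Adj i j) (hcard : S.card = indepNum G)
    (k : V) (hk : k ∉ S) : ∃ j ∈ S, G.Adj k j := by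
  by_contra h
  push_neg at h
  have hind : ∀ i ∈ insert k S, ∀ j ∈ insert k S, ¬ G.Adj i j := by
    intro i hi j hj
    simp only [Finset.mem_insert] at hi hj
    rcases hi with rfl | hi <;> rcases hj with rfl | hj
    · exact G.loopless.irrefl _
    · exact h j hj
    · exact fun hadj => h i hi hadj.symm
    · exact hS i hi j hj
  have := indep_card_le G _ hind
  rw [Finset.card_insert_of_notMem hk, hcard] at this
  omega

lemma specialized_NE {V : Type*} [Fintype V] [DecidableEq V]
    (G : SimpleGraph V) [DecidableRel G.Adj]
    (estar : ℝ) (he : 0 < estar) (S : Finset V)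
    (hS : ∀ i ∈ S, ∀ j ∈ S, ¬ G.Adj i j) (hcard : S.card = indepNum G) :
    isNE G estar (fun k => if k ∈ S then estar else 0) := by
  refine ⟨fun k => by dsimp; split <;> [exact he.le; rfl], ?_, ?_⟩
  · intro k
    by_cases hk : k ∈ S
    · have hnb : ∀ j ∈ G.neighborFinset k, (if j ∈ S then estar else 0) = 0 := by
        intro j hj
        rw [SimpleGraph.mem_neighborFinset] at hj
        have : j ∉ S := fun hjS => hS k hk j hjS hj
        simp [this]
      rw [Finset.sum_eq_zero hnb]
      simp [hk]
    · obtain ⟨j, hjS, hadj⟩ := max_indep_maximal G S hS hcard k hk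
      have hjn : j ∈ G.neighborFinset k := by
        rw [SimpleGraph.mem_neighborFinset]; exact hadj
      have hle : estar ≤ ∑ j ∈ G.neighborFinset k, (if j ∈ S then estar else 0) := by
        calc estar = (if j ∈ S then estar else 0) := by simp [hjS]
        _ ≤ _ := Finset.single_le_sum (f := fun j => if j ∈ S then estar else 0)
              (fun i _ => by split <;> [exact he.le; rfl]) hjn
      simpa [hk] using hle
  · intro k hpos
    have hk : k ∈ S := by
      by_contra hk
      simp [hk] at hpos
    have hnb : ∀ j ∈ G.neighborFinset k, (if j ∈ S then estar else 0) = 0 := by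
      intro j hj
      rw [SimpleGraph.mem_neighborFinset] at hj
      have : j ∉ S := fun hjS => hS k hk j hjS hj
      simp [this]
    rw [Finset.sum_eq_zero hnb]
    simp [hk]

lemma sum_indicator {V : Type*} [Fintype V] [DecidableEq V] (S : Finset V) (estar : ℝ) :
    (∑ k, (if k ∈ S then estar else 0)) = (S.card : ℝ) * estar := by
  rw [Finset.sum_ite_mem, Finset.univ_inter, Finset.sum_const, nsmul_eq_mul]

lemma NE_sum_le {V : Type*} [Fintype V] [DecidableEq V]
    (G : SimpleGraph V) [DecidableRel G.Adj]
    (estar : ℝ) (he : 0 < estar) (x : V → ℝ) (hx : isNE G estar x) :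
    ∑ k, x k ≤ (indepNum G : ℝ) * estar := by
  classical
  obtain ⟨hnn, hge, heq⟩ := hx
  set T : Finset V := Finset.univ.filter (fun k => 0 < x k) with hT
  -- maximal independent subset of T
  have hne : (T.powerset.filter
      fun s : Finset V => ∀ i ∈ s, ∀ j ∈ s, ¬ G.Adj i j).Nonempty := ⟨∅, by simp⟩
  obtain ⟨I, hI, hIcard⟩ := Finset.exists_mem_eq_sup _ hne Finset.card
  simp only [Finset.mem_filter, Finset.mem_powerset] at hI
  obtain ⟨hIT, hIind⟩ := hI
  -- every k ∈ T \ I has a neighbor in I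
  have hmax : ∀ k ∈ T, k ∉ I → ∃ i ∈ I, G.Adj i k := by
    intro k hkT hkI
    by_contra h
    push_neg at h
    have hind : ∀ i ∈ insert k I, ∀ j ∈ insert k I, ¬ G.Adj i j := by
      intro i hi j hj
      simp only [Finset.mem_insert] at hi hj
      rcases hi with rfl | hi <;> rcases hj with rfl | hj
      · exact G.loopless.irrefl _
      · exact fun hadj => h j hj hadj.symm
      · exact h i hi
      · exact hIind i hi j hj
    have hmem : insert k I ∈ T.powerset.filter
        fun s : Finset V => ∀ i ∈ s, ∀ j ∈ s, ¬ G.Adj i j := by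
      simp only [Finset.mem_filter, Finset.mem_powerset]
      exact ⟨Finset.insert_subset hkT hIT, hind⟩
    have := Finset.le_sup (f := Finset.card) hmem
    rw [hIcard, Finset.card_insert_of_notMem hkI] at this
    omega
  -- choice of neighbor
  have hsum_zero : ∀ k, k ∉ T → x k = 0 := by
    intro k hk
    simp only [hT, Finset.mem_filter, Finset.mem_univ, true_and, not_lt] at hk
    exact le_antisymm hk (hnn k)
  have hstep : ∑ k, x k = ∑ k ∈ T, x k := by
    rw [← Finset.sum_subset (Finset.subset_univ T)]
    intro k _ hk
    exact hsum_zero k hk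
  -- f : V → V choosing neighbor in I
  have hchoice : ∀ k ∈ T \ I, ∃ i, i ∈ I ∧ G.Adj i k := by
    intro k hk
    rw [Finset.mem_sdiff] at hk
    obtain ⟨i, hi, hadj⟩ := hmax k hk.1 hk.2
    exact ⟨i, hi, hadj⟩
  set f : V → V := fun k => if h : ∃ i, i ∈ I ∧ G.Adj i k then h.choose else k with hf
  have hfI : ∀ k ∈ T \ I, f k ∈ I ∧ G.Adj (f k) k := by
    intro k hk
    have h := hchoice k hk
    simp only [hf, dif_pos h]
    exact h.choose_spec
  have hsplit : ∑ k ∈ T, x k = ∑ k ∈ I, x k + ∑ k ∈ T \ I, x k := by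
    rw [Finset.sum_sdiff_eq_sub hIT]; ring
  have hfiber : ∑ k ∈ T \ I, x k = ∑ i ∈ I, ∑ k ∈ (T \ I).filter (fun k => f k = i), x k :=
    (Finset.sum_fiberwise_of_maps_to (fun k hk => (hfI k hk).1) x).symm
  have hinner : ∀ i ∈ I, ∑ k ∈ (T \ I).filter (fun k => f k = i), x k
      ≤ ∑ j ∈ G.neighborFinset i, x j := by
    intro i hi
    apply Finset.sum_le_sum_of_subset_of_nonneg
    · intro k hk
      simp only [Finset.mem_filter] at hk
      obtain ⟨hk1, hk2⟩ := hk
      rw [SimpleGraph.mem_neighborFinset]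
      rw [← hk2]
      exact (hfI k hk1).2
    · intro j _ _
      exact hnn j
  have hI_eq : ∀ i ∈ I, x i + ∑ j ∈ G.neighborFinset i, x j = estar := by
    intro i hi
    have : i ∈ T := hIT hi
    simp only [hT, Finset.mem_filter] at this
    exact heq i this.2
  calc ∑ k, x k = ∑ k ∈ I, x k + ∑ k ∈ T \ I, x k := by rw [hstep, hsplit]
    _ ≤ ∑ k ∈ I, x k + ∑ i ∈ I, ∑ j ∈ G.neighborFinset i, x j := by
        rw [hfiber]
        exact add_le_add_right (Finset.sum_le_sum hinner) _
    _ = ∑ i ∈ I, (x i + ∑ j ∈ G.neighborFinset i, x j) := by rw [Finset.sum_add_distrib]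
    _ = ∑ i ∈ I, estar := Finset.sum_congr rfl hI_eq
    _ = (I.card : ℝ) * estar := by rw [Finset.sum_const, nsmul_eq_mul]
    _ ≤ (indepNum G : ℝ) * estar := by
        apply mul_le_mul_of_nonneg_right _ he.le
        exact_mod_cast indep_card_le G I hIind

/-- The maximum aggregate effort over Nash equilibria equals `α(G)·e*`,
attained by the specialized equilibrium supported on a maximum independent set. -/
theorem stmt2 {V : Type*} [Fintype V] [DecidableEq V]
    (G : SimpleGraph V) [DecidableRel G.Adj]
    (estar : ℝ) (he : 0 < estar) :
    IsGreatest {s : ℝ | ∃ x : V → ℝ, isNE G estar x ∧ s = ∑ k, x k}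
      ((indepNum G : ℝ) * estar) ∧
    ∃ S : Finset V, (∀ i ∈ S, ∀ j ∈ S, ¬ G.Adj i j) ∧ S.card = indepNum G ∧
      isNE G estar (fun k => if k ∈ S then estar else 0) ∧
      (∑ k, (if k ∈ S then estar else 0)) = (indepNum G : ℝ) * estar := by
  obtain ⟨S, hSind, hScard⟩ := exists_max_indep G
  have hNE := specialized_NE G estar he S hSind hScard
  have hsum : (∑ k, (if k ∈ S then estar else 0)) = (indepNum G : ℝ) * estar := by
    rw [sum_indicator, hScard]
  constructor
  · constructor
    · exact ⟨_, hNE, hsum.symm⟩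
    · rintro s ⟨x, hx, rfl⟩
      exact NE_sum_le G estar he x hx
  · exact ⟨S, hSind, hScard, hNE, hsum⟩
end

section
/- Let b be increasing and concave with b'(e*) = c and e* > 0, and let n ≥ 2. For any Nash equilibrium x of the public goods game, summing over vertices yields: n·b(e*) + (α_w − n)·σ_b·c·e* ≤ max over Nash equilibria of Σ_k b(E_k(x)) ≤ n·b(e*) + (α_w − n)·c·e*, where α_w·e* is the maximum over Nash equilibria of Σ_k E_k(x) (the (A+I)𝟙-weighted aggregate effort) and σ_b = (b(n·e*) − b(e*))/(c·e*·(n−1)). -/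
open Finset

/-- Total local effort `E_k(x) = x_k + Σ_{j∈N_k} x_j`. -/
def localEffort {V : Type*} [Fintype V] (G : SimpleGraph V) [DecidableRel G.Adj]
    (x : V → ℝ) (k : V) : ℝ := x k + ∑ j ∈ G.neighborFinset k, x j

/-- tangent line at a point lies above a concave function -/
lemma tangent_above {b : ℝ → ℝ} {c estar : ℝ}
    (hb_concave : ConcaveOn ℝ (Set.Ici (0:ℝ)) b)
    (hb_diff : DifferentiableAt ℝ b estar)
    (he : 0 < estar) (hfoc : deriv b estar = c)
    {y : ℝ} (hy : 0 ≤ y) : b y ≤ b estar + c * (y - estar) := by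
  rcases lt_trichotomy y estar with h | h | h
  · have := hb_concave.deriv_le_slope (Set.mem_Ici.2 hy) (Set.mem_Ici.2 he.le) h hb_diff
    rw [slope_def_field, hfoc] at this
    have hne : estar - y > 0 := by linarith
    rw [le_div_iff₀ hne] at this
    nlinarith
  · subst h; simp
  · have := hb_concave.slope_le_deriv (Set.mem_Ici.2 he.le) (Set.mem_Ici.2 hy) h hb_diff
    rw [slope_def_field, hfoc] at this
    have hne : y - estar > 0 := by linarith
    rw [div_le_iff₀ hne] at this
    nlinarith

/-- the chord lies below a concave function -/
lemma chord_below {b : ℝ → ℝ} {a a' : ℝ}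
    (hb_concave : ConcaveOn ℝ (Set.Ici (0:ℝ)) b)
    (ha : 0 ≤ a) (haa : a < a') {y : ℝ} (hy1 : a ≤ y) (hy2 : y ≤ a') :
    b a + (b a' - b a) / (a' - a) * (y - a) ≤ b y := by
  have hd : (0:ℝ) < a' - a := by linarith
  set t : ℝ := (y - a) / (a' - a) with ht
  have ht0 : 0 ≤ t := div_nonneg (by linarith) hd.le
  have ht1 : t ≤ 1 := by rw [ht, div_le_one hd]; linarith
  have hsum : (1 - t) + t = 1 := by ring
  have := hb_concave.2 (Set.mem_Ici.2 ha) (Set.mem_Ici.2 (by linarith : (0:ℝ) ≤ a'))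
    (by linarith : (0:ℝ) ≤ 1 - t) ht0 hsum
  have harg : (1 - t) • a + t • a' = y := by
    rw [smul_eq_mul, smul_eq_mul, ht]; field_simp; ring
  rw [harg, smul_eq_mul, smul_eq_mul] at this
  have heq : (1 - t) * b a + t * b a' = b a + (b a' - b a) / (a' - a) * (y - a) := by
    rw [ht]; field_simp; ring
  linarith

/-- basic bounds on local effort at a Nash equilibrium -/
lemma effort_bounds {V : Type*} [Fintype V] (G : SimpleGraph V) [DecidableRel G.Adj]
    {estar : ℝ} (he : 0 < estar) {x : V → ℝ} (hx : isNE G estar x) (k : V) :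
    estar ≤ localEffort G x k ∧ localEffort G x k ≤ (Fintype.card V : ℝ) * estar := by
  classical
  obtain ⟨h0, h1, h2⟩ := hx
  refine ⟨h1 k, ?_⟩
  have hxle : ∀ j, x j ≤ estar := by
    intro j
    rcases lt_or_eq_of_le (h0 j) with hj | hj
    · have heq : x j + ∑ i ∈ G.neighborFinset j, x i = estar := h2 j hj
      have hnn : 0 ≤ ∑ i ∈ G.neighborFinset j, x i :=
        Finset.sum_nonneg fun i _ => h0 i
      linarith
    · linarith
  have hsub : localEffort G x k = ∑ j ∈ insert k (G.neighborFinset k), x j := by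
    rw [Finset.sum_insert (SimpleGraph.notMem_neighborFinset_self G k)]; rfl
  rw [hsub]
  calc ∑ j ∈ insert k (G.neighborFinset k), x j
      ≤ ∑ j ∈ Finset.univ, x j := by
        apply Finset.sum_le_sum_of_subset_of_nonneg (Finset.subset_univ _)
        intro i _ _; exact h0 i
    _ ≤ ∑ _j ∈ (Finset.univ : Finset V), estar :=
        Finset.sum_le_sum fun j _ => hxle j
    _ = (Fintype.card V : ℝ) * estar := by
        rw [Finset.sum_const, Finset.card_univ, nsmul_eq_mul]

/-- bounds on the maximum aggregate benefit over Nash equilibria in terms of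
the `(A+I)𝟙`-weighted independence number `α_w` and the curvature parameter `σ_b`. -/
theorem stmt6 {V : Type*} [Fintype V] (G : SimpleGraph V) [DecidableRel G.Adj]
    (b : ℝ → ℝ) (c estar : ℝ)
    (hb_mono : MonotoneOn b (Set.Ici (0:ℝ)))
    (hb_concave : ConcaveOn ℝ (Set.Ici (0:ℝ)) b)
    (hb_diff : ∀ y ∈ Set.Ici (0:ℝ), DifferentiableAt ℝ b y)
    (hc : 0 < c) (he : 0 < estar) (hfoc : deriv b estar = c)
    (n : ℕ) (hn : n = Fintype.card V) (hn2 : 2 ≤ n)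
    (σb : ℝ) (hσ : σb = (b ((n : ℝ) * estar) - b estar) / (c * estar * ((n : ℝ) - 1)))
    (αw : ℝ)
    -- `α_w·e*` is the maximum over Nash equilibria of `Σ_k E_k(x)`
    (hαw : IsGreatest {s : ℝ | ∃ x : V → ℝ, isNE G estar x ∧ s = ∑ k, localEffort G x k}
      (αw * estar)) :
    (n : ℝ) * b estar + (αw - n) * σb * c * estar ≤
      sSup {s : ℝ | ∃ x : V → ℝ, isNE G estar x ∧ s = ∑ k, b (localEffort G x k)} ∧
    sSup {s : ℝ | ∃ x : V → ℝ, isNE G estar x ∧ s = ∑ k, b (localEffort G x k)} ≤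
      (n : ℝ) * b estar + (αw - n) * c * estar := by
  have hn1 : (1:ℝ) < (n:ℝ) := by exact_mod_cast lt_of_lt_of_le one_lt_two hn2
  set T : Set ℝ := {s : ℝ | ∃ x : V → ℝ, isNE G estar x ∧ s = ∑ k, b (localEffort G x k)}
    with hT
  -- upper bound on every element of T
  have hub : ∀ s ∈ T, s ≤ (n : ℝ) * b estar + (αw - n) * c * estar := by
    rintro s ⟨x, hx, rfl⟩
    have hE : ∀ k, b (localEffort G x k) ≤ b estar + c * (localEffort G x k - estar) := by
      intro k
      have h := effort_bounds G he hx k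
      exact tangent_above hb_concave (hb_diff estar (Set.mem_Ici.2 he.le)) he hfoc
        (by linarith [h.1])
    have hsumE : ∑ k, localEffort G x k ≤ αw * estar := hαw.2 ⟨x, hx, rfl⟩
    calc ∑ k, b (localEffort G x k)
        ≤ ∑ k, (b estar + c * (localEffort G x k - estar)) :=
          Finset.sum_le_sum fun k _ => hE k
      _ = (n : ℝ) * b estar + c * ((∑ k, localEffort G x k) - (n : ℝ) * estar) := by
          rw [Finset.sum_add_distrib, Finset.sum_const, Finset.card_univ, ← hn,
            nsmul_eq_mul, ← Finset.mul_sum, Finset.sum_sub_distrib, Finset.sum_const,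
            Finset.card_univ, ← hn, nsmul_eq_mul]
      _ ≤ (n : ℝ) * b estar + c * (αw * estar - (n : ℝ) * estar) := by nlinarith
      _ = (n : ℝ) * b estar + (αw - n) * c * estar := by ring
  obtain ⟨x0, hx0, hs0⟩ := hαw.1
  have hne : ((∑ k, b (localEffort G x0 k)) : ℝ) ∈ T := ⟨x0, hx0, rfl⟩
  have hbdd : BddAbove T := ⟨(n : ℝ) * b estar + (αw - n) * c * estar, hub⟩
  constructor
  · -- lower bound
    refine le_trans ?_ (le_csSup hbdd hne)
    have hslope : (b ((n:ℝ) * estar) - b estar) / ((n:ℝ) * estar - estar) = σb * c := by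
      have h5 : (0:ℝ) < (n:ℝ) * estar - estar := by nlinarith
      have hden : (0:ℝ) < c * estar * ((n:ℝ) - 1) := by
        apply mul_pos (mul_pos hc he); linarith
      rw [hσ, div_mul_eq_mul_div, div_eq_div_iff h5.ne' hden.ne']
      ring
    have hE : ∀ k, b estar + σb * c * (localEffort G x0 k - estar) ≤
        b (localEffort G x0 k) := by
      intro k
      have h := effort_bounds G he hx0 k
      have := chord_below hb_concave he.le
        (by nlinarith : estar < (n:ℝ) * estar) h.1 (by rw [hn]; exact h.2)
      rwa [hslope] at this
    calc (n : ℝ) * b estar + (αw - n) * σb * c * estar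
        = (n : ℝ) * b estar + σb * c * (αw * estar - (n : ℝ) * estar) := by ring
      _ = ∑ k, (b estar + σb * c * (localEffort G x0 k - estar)) := by
          rw [Finset.sum_add_distrib, Finset.sum_const, Finset.card_univ, ← hn,
            nsmul_eq_mul, ← Finset.mul_sum, Finset.sum_sub_distrib, Finset.sum_const,
            Finset.card_univ, ← hn, nsmul_eq_mul, hs0]
      _ ≤ ∑ k, b (localEffort G x0 k) := Finset.sum_le_sum fun k _ => hE k
  · exact csSup_le ⟨_, hne⟩ hub
end

section
/- Let f : [0,1] → ℝ be a function that is continuous, strictly convex on [0, μ_d] and strictly concave on [μ_d, 1] for some μ_d ∈ (0,1). Then the concave closure C_f of f (the pointwise infimum of concave functions dominating f on [0,1]) satisfies C_f(0) = f(0), and there exists μ₁ ∈ (0,1] such that C_f equals the chord from (0, f(0)) to (μ₁, f(μ₁)) on [0, μ₁] and equals f on [μ₁, 1]. -/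
/-- Concave closure of `f` on `[0,1]`: pointwise infimum of concave functions dominating `f`. -/
noncomputable def concaveClosure (f : ℝ → ℝ) (x : ℝ) : ℝ :=
  sInf {y : ℝ | ∃ ℓ : ℝ → ℝ, ConcaveOn ℝ (Set.Icc (0:ℝ) 1) ℓ ∧
    (∀ t ∈ Set.Icc (0:ℝ) 1, f t ≤ ℓ t) ∧ y = ℓ x}

/-- for `f` continuous on `[0,1]`, strictly convex on `[0,μ_d]` and strictly
concave on `[μ_d,1]`, the concave closure agrees with `f` at `0`, is a chord from
`(0,f 0)` to `(μ₁, f μ₁)` on `[0,μ₁]` for some `μ₁ ∈ (0,1]`, and equals `f` on `[μ₁,1]`. -/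
theorem stmt13 (f : ℝ → ℝ) (μd : ℝ) (hμd : μd ∈ Set.Ioo (0:ℝ) 1)
    (hcont : ContinuousOn f (Set.Icc (0:ℝ) 1))
    (hconv : StrictConvexOn ℝ (Set.Icc (0:ℝ) μd) f)
    (hconc : StrictConcaveOn ℝ (Set.Icc μd 1) f) :
    concaveClosure f 0 = f 0 ∧
    ∃ μ1 ∈ Set.Ioc (0:ℝ) 1,
      (∀ x ∈ Set.Icc (0:ℝ) μ1,
        concaveClosure f x = f 0 + (f μ1 - f 0) / μ1 * x) ∧
      (∀ x ∈ Set.Icc μ1 1, concaveClosure f x = f x) := by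
  obtain ⟨hμd0, hμd1⟩ := hμd
  have hconvOn := hconv.convexOn
  have hconcOn := hconc.concaveOn
  have hsub : Set.Icc μd 1 ⊆ Set.Icc (0:ℝ) 1 := Set.Icc_subset_Icc hμd0.le le_rfl
  -- maximize the slope function on [μd, 1]
  have hgc : ContinuousOn (fun μ => (f μ - f 0) / μ) (Set.Icc μd 1) :=
    ((hcont.mono hsub).sub continuousOn_const).div continuousOn_id
      (fun x hx => ne_of_gt (lt_of_lt_of_le hμd0 hx.1))
  obtain ⟨μ1, hμ1mem, hmax⟩ :=
    isCompact_Icc.exists_isMaxOn ⟨μd, le_rfl, hμd1.le⟩ hgc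
  obtain ⟨hμdμ1, hμ11⟩ := hμ1mem
  have hμ10 : 0 < μ1 := lt_of_lt_of_le hμd0 hμdμ1
  set s : ℝ := (f μ1 - f 0) / μ1 with hs
  have hchord : f μ1 = f 0 + s * μ1 := by
    rw [hs]; field_simp; ring
  -- the chord dominates f on all of [0,1]
  have hAd : ∀ z, μd ≤ z → z ≤ 1 → f z ≤ f 0 + s * z := by
    intro z hzd hz1
    have hz0 : 0 < z := lt_of_lt_of_le hμd0 hzd
    have := hmax ⟨hzd, hz1⟩
    simp only [Set.mem_setOf_eq] at this
    rw [div_le_iff₀ hz0] at this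
    linarith [this]
  have hA : ∀ z ∈ Set.Icc (0:ℝ) 1, f z ≤ f 0 + s * z := by
    intro z hz
    rcases le_or_gt μd z with hzd | hzd
    · exact hAd z hzd hz.2
    · -- z < μd : use convexity between 0 and μd
      have hb0 : 0 ≤ z / μd := div_nonneg hz.1 hμd0.le
      have hb1 : z / μd ≤ 1 := by rw [div_le_one hμd0]; exact hzd.le
      have hcomb := hconvOn.2 (x := 0) (y := μd) ⟨le_rfl, hμd0.le⟩ ⟨hμd0.le, le_rfl⟩
        (by linarith : (0:ℝ) ≤ 1 - z / μd) hb0 (by ring)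
      have hpt : (1 - z / μd) • (0:ℝ) + (z / μd) • μd = z := by
        rw [smul_eq_mul, smul_eq_mul, mul_zero, zero_add]; exact div_mul_cancel₀ z (ne_of_gt hμd0)
      rw [hpt] at hcomb
      simp only [smul_eq_mul] at hcomb
      have hfd := hAd μd le_rfl hμd1.le
      have h1 : (z / μd) * f μd ≤ (z / μd) * (f 0 + s * μd) :=
        mul_le_mul_of_nonneg_left hfd hb0
      have h2 : (z / μd) * μd = z := div_mul_cancel₀ z (ne_of_gt hμd0)
      have h3 : s * ((z / μd) * μd) = s * z := by rw [h2]
      nlinarith [hcomb, h1, h3]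
  -- the candidate closure
  set h : ℝ → ℝ := fun x => if x ≤ μ1 then f 0 + s * x else f x with hh
  have hhf : ∀ t ∈ Set.Icc (0:ℝ) 1, f t ≤ h t := by
    intro t ht
    by_cases htμ : t ≤ μ1
    · simp only [hh, if_pos htμ]; exact hA t ht
    · simp only [hh, if_neg htμ]
      exact le_rfl
  have hconcIcc : ConcaveOn ℝ (Set.Icc μ1 1) f :=
    hconcOn.subset (Set.Icc_subset_Icc hμdμ1 le_rfl) (convex_Icc _ _)
  -- concavity of h
  have hkey : ∀ x ∈ Set.Icc (0:ℝ) 1, ∀ y ∈ Set.Icc (0:ℝ) 1, x ≤ y →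
      ∀ a b : ℝ, 0 ≤ a → 0 ≤ b → a + b = 1 →
      a * h x + b * h y ≤ h (a * x + b * y) := by
    intro x hx y hy hxy a b ha hb hab
    have hb1 : b = 1 - a := by linarith
    subst hb1
    have ha1 : a ≤ 1 := by linarith
    have hzx : x ≤ a * x + (1 - a) * y := by nlinarith [mul_nonneg hb (sub_nonneg.2 hxy)]
    have hzy : a * x + (1 - a) * y ≤ y := by nlinarith [mul_nonneg ha (sub_nonneg.2 hxy)]
    by_cases hyμ : y ≤ μ1
    · have hxμ : x ≤ μ1 := le_trans hxy hyμ
      have hzμ : a * x + (1 - a) * y ≤ μ1 := le_trans hzy hyμ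
      simp only [hh, if_pos hxμ, if_pos hyμ, if_pos hzμ]
      have : a * (f 0 + s * x) + (1 - a) * (f 0 + s * y) = f 0 + s * (a * x + (1 - a) * y) := by
        linear_combination f 0 * hab
      linarith [this.ge]
    · push_neg at hyμ
      by_cases hzμ : a * x + (1 - a) * y ≤ μ1
      · have hxμ : x ≤ μ1 := le_trans hzx hzμ
        simp only [hh, if_pos hxμ, if_neg (not_le.2 hyμ), if_pos hzμ]
        have hAy := hA y hy
        have h1 : (1 - a) * f y ≤ (1 - a) * (f 0 + s * y) := mul_le_mul_of_nonneg_left hAy hb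
        have h2 : a * (f 0 + s * x) + (1 - a) * (f 0 + s * y)
            = f 0 + s * (a * x + (1 - a) * y) := by ring
        linarith [h1, h2.le, h2.ge]
      · push_neg at hzμ
        by_cases hxμ : x ≤ μ1
        · -- x on the chord side, the combination above μ1
          have hyμ1 : 0 < y - μ1 := by linarith
          set u : ℝ := (y - (a * x + (1 - a) * y)) / (y - μ1) with hu
          have hu0 : 0 ≤ u := div_nonneg (by linarith) hyμ1.le
          have hu1 : u ≤ 1 := by
            rw [hu, div_le_one hyμ1]; linarith
          have hcomb : u * μ1 + (1 - u) * y = a * x + (1 - a) * y := by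
            rw [hu]; field_simp; ring
          have hau : a ≤ u := by
            rw [hu, le_div_iff₀ hyμ1]
            nlinarith [mul_nonneg ha (sub_nonneg.2 hxμ)]
          have hfconc := hconcIcc.2 (x := μ1) (y := y) ⟨le_rfl, hμ11⟩
            ⟨hyμ.le, hy.2⟩ hu0 (by linarith : (0:ℝ) ≤ 1 - u) (by ring)
          simp only [smul_eq_mul] at hfconc
          rw [hcomb] at hfconc
          have hAy := hA y hy
          simp only [hh, if_pos hxμ, if_neg (not_le.2 hyμ), if_neg (not_le.2 hzμ)]
          have hprod : 0 ≤ (u - a) * ((f 0 + s * y) - f y) :=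
            mul_nonneg (by linarith) (by linarith)
          have hs1 : s * (u * μ1 + (1 - u) * y) = s * (a * x + (1 - a) * y) := by
            rw [hcomb]
          have hch2 : u * f μ1 = u * (f 0 + s * μ1) := by rw [hchord]
          nlinarith [hfconc, hprod, hs1, hch2]
        · push_neg at hxμ
          simp only [hh, if_neg (not_le.2 hxμ), if_neg (not_le.2 hyμ),
            if_neg (not_le.2 hzμ)]
          have := hconcIcc.2 (x := x) (y := y) ⟨hxμ.le, hx.2⟩ ⟨hyμ.le, hy.2⟩ ha hb hab
          simpa [smul_eq_mul] using this
  have hconch : ConcaveOn ℝ (Set.Icc (0:ℝ) 1) h := by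
    refine ⟨convex_Icc _ _, ?_⟩
    intro x hx y hy a b ha hb hab
    rcases le_total x y with hxy | hxy
    · simpa [smul_eq_mul] using hkey x hx y hy hxy a b ha hb hab
    · have H := hkey y hy x hx hxy b a hb ha (by linarith)
      have e1 : b * y + a * x = a * x + b * y := by ring
      rw [e1] at H
      simpa [smul_eq_mul, add_comm (b * h y)] using H
  -- h is the least concave majorant
  have hlb : ∀ ℓ : ℝ → ℝ, ConcaveOn ℝ (Set.Icc (0:ℝ) 1) ℓ →
      (∀ t ∈ Set.Icc (0:ℝ) 1, f t ≤ ℓ t) → ∀ x ∈ Set.Icc (0:ℝ) 1, h x ≤ ℓ x := by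
    intro ℓ hℓc hℓf x hx
    by_cases hxμ : x ≤ μ1
    · simp only [hh, if_pos hxμ]
      have ht0 : 0 ≤ x / μ1 := div_nonneg hx.1 hμ10.le
      have ht1 : x / μ1 ≤ 1 := by rw [div_le_one hμ10]; exact hxμ
      have hcomb := hℓc.2 (x := 0) (y := μ1) ⟨le_rfl, zero_le_one⟩ ⟨hμ10.le, hμ11⟩
        (by linarith : (0:ℝ) ≤ 1 - x / μ1) ht0 (by ring)
      have hpt : (1 - x / μ1) • (0:ℝ) + (x / μ1) • μ1 = x := by
        rw [smul_eq_mul, smul_eq_mul, mul_zero, zero_add]; exact div_mul_cancel₀ x (ne_of_gt hμ10)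
      rw [hpt] at hcomb
      simp only [smul_eq_mul] at hcomb
      have h0 := hℓf 0 ⟨le_rfl, zero_le_one⟩
      have h1 := hℓf μ1 ⟨hμ10.le, hμ11⟩
      have htx : (x / μ1) * μ1 = x := div_mul_cancel₀ x (ne_of_gt hμ10)
      have hst : s * ((x / μ1) * μ1) = s * x := by rw [htx]
      have hch3 : (x / μ1) * f μ1 = (x / μ1) * (f 0 + s * μ1) := by rw [hchord]
      nlinarith [hcomb, mul_le_mul_of_nonneg_left h0 (by linarith : (0:ℝ) ≤ 1 - x / μ1),
        mul_le_mul_of_nonneg_left h1 ht0, hch3, hst]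
    · simp only [hh, if_neg hxμ]
      exact hℓf x hx
  -- the closure equals h on [0,1]
  have hcc : ∀ x ∈ Set.Icc (0:ℝ) 1, concaveClosure f x = h x := by
    intro x hx
    have hmem : h x ∈ {y : ℝ | ∃ ℓ : ℝ → ℝ, ConcaveOn ℝ (Set.Icc (0:ℝ) 1) ℓ ∧
        (∀ t ∈ Set.Icc (0:ℝ) 1, f t ≤ ℓ t) ∧ y = ℓ x} := ⟨h, hconch, hhf, rfl⟩
    have hlow : ∀ y ∈ {y : ℝ | ∃ ℓ : ℝ → ℝ, ConcaveOn ℝ (Set.Icc (0:ℝ) 1) ℓ ∧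
        (∀ t ∈ Set.Icc (0:ℝ) 1, f t ≤ ℓ t) ∧ y = ℓ x}, h x ≤ y := by
      rintro y ⟨ℓ, hℓc, hℓf, rfl⟩
      exact hlb ℓ hℓc hℓf x hx
    exact le_antisymm (csInf_le ⟨h x, hlow⟩ hmem) (le_csInf ⟨h x, hmem⟩ hlow)
  constructor
  · rw [hcc 0 ⟨le_rfl, zero_le_one⟩]
    simp only [hh, if_pos hμ10.le]
    ring
  refine ⟨μ1, ⟨hμ10, hμ11⟩, ?_, ?_⟩
  · intro x hx
    rw [hcc x ⟨hx.1, le_trans hx.2 hμ11⟩]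
    simp only [hh, if_pos hx.2]
    rfl
  · intro x hx
    rw [hcc x ⟨le_trans hμ10.le hx.1, hx.2⟩]
    rcases eq_or_lt_of_le hx.1 with he | hlt
    · simp only [hh, ← he, if_pos le_rfl]
      exact hchord.symm
    · simp only [hh, if_neg (not_le.2 hlt)]
end

section
/- Let G = (V,E) be a finite simple graph, e* > 0, and w : V → ℝ_{>0} a positive weight function. For any Nash equilibrium x of the public goods game (x ≥ 0, E_k(x) ≥ e* for all k, E_k(x) = e* when x_k > 0), the w-weighted aggregate effort satisfies Σ_k w_k·x_k ≤ α_w(G)·e*, where α_w(G) is the maximum of Σ_{k∈S} w_k over independent sets S of G; moreover equality holds for the specialized equilibrium supported on a w-weighted maximum independent set (when that set is maximal). -/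
open Finset

lemma key_lemma {V : Type*} [Fintype V] [DecidableEq V]
    (G : SimpleGraph V) [DecidableRel G.Adj]
    (estar : ℝ) (x w : V → ℝ) (hx0 : ∀ k, 0 ≤ x k)
    (hne : ∀ k, 0 < x k → x k + ∑ j ∈ G.neighborFinset k, x j = estar)
    (hw : ∀ k, 0 < w k) :
    ∀ T : Finset V, (∀ k ∈ T, 0 < x k) →
      ∃ S : Finset V, S ⊆ T ∧ (∀ i ∈ S, ∀ j ∈ S, ¬ G.Adj i j) ∧
        ∑ k ∈ T, w k * x k ≤ (∑ k ∈ S, w k) * estar := by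
  intro T
  induction T using Finset.strongInduction with
  | _ T ih =>
    intro hT
    rcases T.eq_empty_or_nonempty with rfl | hTne
    · exact ⟨∅, by simp, by simp, by simp⟩
    · obtain ⟨a, haT, hamax⟩ := T.exists_max_image w hTne
      set C := insert a (G.neighborFinset a) with hC
      have haC : a ∈ C := mem_insert_self _ _
      have hsub : T \ C ⊆ T := sdiff_subset
      have hss : T \ C ⊂ T :=
        (Finset.ssubset_iff_of_subset hsub).mpr ⟨a, haT, by simp [haC]⟩
      obtain ⟨S', hS'sub, hS'ind, hS'sum⟩ := ih _ hss (fun k hk => hT k (hsub hk))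
      have haS' : a ∉ S' := fun h => (mem_sdiff.mp (hS'sub h)).2 haC
      refine ⟨insert a S', ?_, ?_, ?_⟩
      · exact insert_subset haT (hS'sub.trans hsub)
      · intro i hi j hj hadj
        rcases mem_insert.mp hi with hia | hiS <;> rcases mem_insert.mp hj with hja | hjS
        · exact G.irrefl (hia ▸ hja ▸ hadj)
        · exact (mem_sdiff.mp (hS'sub hjS)).2
            (mem_insert_of_mem ((G.mem_neighborFinset a j).mpr (hia ▸ hadj)))
        · exact (mem_sdiff.mp (hS'sub hiS)).2
            (mem_insert_of_mem ((G.mem_neighborFinset a i).mpr (hja ▸ hadj).symm))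
        · exact hS'ind i hiS j hjS hadj
      · have hxa : 0 < x a := hT a haT
        have hCsum : ∑ k ∈ C, x k = estar := by
          rw [hC, Finset.sum_insert (G.notMem_neighborFinset_self a)]
          exact hne a hxa
        have h1 : ∑ k ∈ T ∩ C, w k * x k ≤ w a * estar := by
          calc ∑ k ∈ T ∩ C, w k * x k
              ≤ ∑ k ∈ T ∩ C, w a * x k := by
                refine Finset.sum_le_sum fun k hk => ?_
                exact mul_le_mul_of_nonneg_right
                  (hamax k (Finset.mem_inter.mp hk).1) (hx0 k)
            _ ≤ ∑ k ∈ C, w a * x k := by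
                refine Finset.sum_le_sum_of_subset_of_nonneg
                  (Finset.inter_subset_right) fun k _ _ =>
                  mul_nonneg (hw a).le (hx0 k)
            _ = w a * estar := by rw [← Finset.mul_sum, hCsum]
        have hsplit : ∑ k ∈ T, w k * x k
            = ∑ k ∈ T ∩ C, w k * x k + ∑ k ∈ T \ C, w k * x k :=
          (Finset.sum_inter_add_sum_sdiff T C _).symm
        rw [hsplit, Finset.sum_insert haS', add_mul]
        exact add_le_add h1 hS'sum

/-- for positive weights `w`, every Nash equilibrium has `w`-weighted aggregate
effort at most `α_w(G)·e*` (with `α_w(G)` the `w`-weighted independence number), and the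
specialized equilibrium on a `w`-weighted maximum independent set (when maximal) attains it. -/
theorem stmt17 {V : Type*} [Fintype V] [DecidableEq V]
    (G : SimpleGraph V) [DecidableRel G.Adj]
    (estar : ℝ) (he : 0 < estar)
    (w : V → ℝ) (hw : ∀ k, 0 < w k)
    (αw : ℝ)
    (hαw : IsGreatest {s : ℝ | ∃ S : Finset V,
      (∀ i ∈ S, ∀ j ∈ S, ¬ G.Adj i j) ∧ s = ∑ k ∈ S, w k} αw) :
    (∀ x : V → ℝ, isNE G estar x → ∑ k, w k * x k ≤ αw * estar) ∧
    (∀ S : Finset V, (∀ i ∈ S, ∀ j ∈ S, ¬ G.Adj i j) → (∑ k ∈ S, w k) = αw →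
      -- S maximal
      (∀ k : V, k ∉ S → ∃ j ∈ S, G.Adj k j) →
      ∑ k, w k * (if k ∈ S then estar else 0) = αw * estar) := by
  constructor
  · intro x ⟨hx0, _, hne⟩
    classical
    set T : Finset V := Finset.univ.filter (fun k => 0 < x k) with hT
    have hTsum : ∑ k ∈ T, w k * x k = ∑ k, w k * x k := by
      refine Finset.sum_subset (Finset.subset_univ T) fun k _ hk => ?_
      have : ¬ 0 < x k := by simpa [hT] using hk
      have : x k = 0 := le_antisymm (not_lt.mp this) (hx0 k)
      simp [this]
    obtain ⟨S, _, hSind, hSsum⟩ := key_lemma G estar x w hx0 hne hw T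
      (fun k hk => by simpa [hT] using hk)
    have hSle : ∑ k ∈ S, w k ≤ αw := hαw.2 ⟨S, hSind, rfl⟩
    calc ∑ k, w k * x k = ∑ k ∈ T, w k * x k := hTsum.symm
      _ ≤ (∑ k ∈ S, w k) * estar := hSsum
      _ ≤ αw * estar := mul_le_mul_of_nonneg_right hSle he.le
  · intro S hSind hSsum _
    calc ∑ k, w k * (if k ∈ S then estar else 0)
        = ∑ k ∈ S, w k * estar := by
          simp only [mul_ite, mul_zero]
          rw [Finset.sum_ite_mem, Finset.univ_inter]
      _ = αw * estar := by rw [← Finset.sum_mul, hSsum]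
end
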